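/- Let X be a real random variable with E(X) = 0, E(X²) = σ² > 0, and E(X⁴) ≤ b·σ⁴ for some b > 0. Then P(X ≥ σ/(2√b)) > 0. -/

import Mathlib

open MeasureTheory

-- Cauchy–Schwarz for integrals, squared form
lemma my_cs {Ω : Type*} [MeasurableSpace Ω] {μ : Measure Ω} {f g : Ω → ℝ}
    (hf : ∀ ω, 0 ≤ f ω) (hg : ∀ ω, 0 ≤ g ω)
    (hfm : AEStronglyMeasurable f μ) (hgm : AEStronglyMeasurable g μ)
    (hf2 : Integrable (fun ω => f ω ^ 2) μ) (hg2 : Integrable (fun ω => g ω ^ 2) μ) :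
    (∫ ω, f ω * g ω ∂μ) ^ 2 ≤ (∫ ω, f ω ^ 2 ∂μ) * (∫ ω, g ω ^ 2 ∂μ) := by
  have hpq : (2:ℝ).HolderConjugate 2 := Real.holderConjugate_iff.mpr ⟨one_lt_two, by norm_num⟩
  have hfL : MemLp f (ENNReal.ofReal (2:ℝ)) μ := by
    rw [show ENNReal.ofReal (2:ℝ) = 2 by norm_num]
    exact (memLp_two_iff_integrable_sq hfm).2 hf2
  have hgL : MemLp g (ENNReal.ofReal (2:ℝ)) μ := by
    rw [show ENNReal.ofReal (2:ℝ) = 2 by norm_num]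
    exact (memLp_two_iff_integrable_sq hgm).2 hg2
  have h := integral_mul_le_Lp_mul_Lq_of_nonneg hpq
    (Filter.Eventually.of_forall hf) (Filter.Eventually.of_forall hg) hfL hgL
  have hrw : ∀ (h : Ω → ℝ), (∫ ω, h ω ^ (2:ℝ) ∂μ) = ∫ ω, h ω ^ 2 ∂μ := by
    intro h; congr 1; ext ω; rw [show (2:ℝ) = ((2:ℕ):ℝ) by norm_num, Real.rpow_natCast]
  rw [hrw f, hrw g] at h
  have hf2n : 0 ≤ ∫ ω, f ω ^ 2 ∂μ := integral_nonneg fun ω => sq_nonneg _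
  have hg2n : 0 ≤ ∫ ω, g ω ^ 2 ∂μ := integral_nonneg fun ω => sq_nonneg _
  have hfgn : 0 ≤ ∫ ω, f ω * g ω ∂μ :=
    integral_nonneg fun ω => mul_nonneg (hf ω) (hg ω)
  calc (∫ ω, f ω * g ω ∂μ) ^ 2
      ≤ ((∫ ω, f ω ^ 2 ∂μ) ^ (1/2:ℝ) * (∫ ω, g ω ^ 2 ∂μ) ^ (1/2:ℝ)) ^ 2 :=
        pow_le_pow_left₀ hfgn h 2
    _ = (∫ ω, f ω ^ 2 ∂μ) * (∫ ω, g ω ^ 2 ∂μ) := by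
        rw [mul_pow, ← Real.rpow_natCast (_ ^ (1/2:ℝ)) 2, ← Real.rpow_natCast (_ ^ (1/2:ℝ)) 2,
          ← Real.rpow_mul hf2n, ← Real.rpow_mul hg2n]
        norm_num


set_option maxHeartbeats 1000000 in
/-- If `E(X) = 0`, `E(X²) = σ² > 0` and `E(X⁴) ≤ b·σ⁴`, then
`P(X ≥ σ/(2√b)) > 0`. -/
theorem stmt_1 {Ω : Type*} [MeasurableSpace Ω] (μ : Measure Ω) [IsProbabilityMeasure μ]
    (X : Ω → ℝ) (hX : Measurable X) (σ b : ℝ) (hσ : 0 < σ) (hb : 0 < b)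
    (h1 : Integrable X μ)
    (h2 : Integrable (fun ω => (X ω) ^ 2) μ)
    (h4 : Integrable (fun ω => (X ω) ^ 4) μ)
    (hE1 : ∫ ω, X ω ∂μ = 0)
    (hE2 : ∫ ω, (X ω) ^ 2 ∂μ = σ ^ 2)
    (hE4 : ∫ ω, (X ω) ^ 4 ∂μ ≤ b * σ ^ 4) :
    0 < μ {ω | σ / (2 * Real.sqrt b) ≤ X ω} := by
  set t : ℝ := σ / (2 * Real.sqrt b) with ht_def
  have hsb : 0 < Real.sqrt b := Real.sqrt_pos.2 hb
  have ht : 0 < t := div_pos hσ (by positivity)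
  have ht2 : t ^ 2 = σ ^ 2 / (4 * b) := by
    rw [ht_def, div_pow, mul_pow, Real.sq_sqrt hb.le]; ring_nf
  -- b ≥ 1
  have hb1 : 1 ≤ b := by
    have hsqint : Integrable (fun ω => (X ω ^ 2) ^ 2) μ := by
      have : (fun ω => (X ω ^ 2) ^ 2) = fun ω => X ω ^ 4 := by ext ω; ring
      rw [this]; exact h4
    have hcs := my_cs (μ := μ) (f := fun ω => X ω ^ 2) (g := fun _ => 1)
      (fun ω => sq_nonneg _) (fun _ => zero_le_one)
      h2.aestronglyMeasurable aestronglyMeasurable_const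
      hsqint (by simpa using integrable_const (1:ℝ))
    simp only [mul_one, one_pow] at hcs
    rw [hE2, integral_const, probReal_univ] at hcs
    simp only [ENNReal.toReal_one, one_smul, smul_eq_mul, one_mul] at hcs
    have h24 : (∫ ω, (X ω ^ 2) ^ 2 ∂μ) = ∫ ω, X ω ^ 4 ∂μ := by
      congr 1; ext ω; ring
    rw [h24] at hcs
    have : σ ^ 4 ≤ b * σ ^ 4 := by
      calc σ ^ 4 = (σ ^ 2) ^ 2 := by ring
        _ ≤ ∫ ω, X ω ^ 4 ∂μ := by simpa using hcs
        _ ≤ b * σ ^ 4 := hE4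
    nlinarith [pow_pos hσ 4]
  by_contra hcon
  push_neg at hcon
  have h0 : μ {ω | t ≤ X ω} = 0 := le_antisymm hcon zero_le
  have hae : ∀ᵐ ω ∂μ, X ω < t := by
    rw [ae_iff]
    convert h0 using 2
    ext ω; simp [not_lt]
  clear_value t
  -- positive and negative parts
  set Y : Ω → ℝ := fun ω => max (X ω) 0 with hY_def
  set Z : Ω → ℝ := fun ω => max (-X ω) 0 with hZ_def
  have hYn : ∀ ω, 0 ≤ Y ω := fun ω => le_max_right _ _
  have hZn : ∀ ω, 0 ≤ Z ω := fun ω => le_max_right _ _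
  have hcases : ∀ ω, (Y ω = X ω ∧ Z ω = 0) ∨ (Y ω = 0 ∧ Z ω = -X ω) := by
    intro ω
    rcases le_total (X ω) 0 with h | h
    · exact Or.inr ⟨max_eq_right h, max_eq_left (neg_nonneg.2 h)⟩
    · exact Or.inl ⟨max_eq_left h, max_eq_right (neg_nonpos.2 h)⟩
  have hX1 : ∀ ω, X ω = Y ω - Z ω := by
    intro ω; rcases hcases ω with ⟨e1, e2⟩ | ⟨e1, e2⟩ <;> rw [e1, e2] <;> ring
  have hX2 : ∀ ω, X ω ^ 2 = Y ω ^ 2 + Z ω ^ 2 := by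
    intro ω; rcases hcases ω with ⟨e1, e2⟩ | ⟨e1, e2⟩ <;> rw [e1, e2] <;> ring
  have hX4 : ∀ ω, X ω ^ 4 = Y ω ^ 4 + Z ω ^ 4 := by
    intro ω; rcases hcases ω with ⟨e1, e2⟩ | ⟨e1, e2⟩ <;> rw [e1, e2] <;> ring
  have hYm : Measurable Y := hX.max measurable_const
  have hZm : Measurable Z := hX.neg.max measurable_const
  -- integrability
  have hYint : Integrable Y μ := h1.pos_part
  have hZint : Integrable Z μ := h1.neg.pos_part
  have hY2int : Integrable (fun ω => Y ω ^ 2) μ := by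
    refine h2.mono ((hYm.pow_const 2).aestronglyMeasurable) ?_
    refine Filter.Eventually.of_forall fun ω => ?_
    rw [Real.norm_eq_abs, Real.norm_eq_abs, abs_of_nonneg (sq_nonneg _),
      abs_of_nonneg (sq_nonneg _)]
    nlinarith [hX2 ω, sq_nonneg (Z ω)]
  have hZ2int : Integrable (fun ω => Z ω ^ 2) μ := by
    refine h2.mono ((hZm.pow_const 2).aestronglyMeasurable) ?_
    refine Filter.Eventually.of_forall fun ω => ?_
    rw [Real.norm_eq_abs, Real.norm_eq_abs, abs_of_nonneg (sq_nonneg _),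
      abs_of_nonneg (sq_nonneg _)]
    nlinarith [hX2 ω, sq_nonneg (Y ω)]
  have hZ4int : Integrable (fun ω => Z ω ^ 4) μ := by
    refine h4.mono ((hZm.pow_const 4).aestronglyMeasurable) ?_
    refine Filter.Eventually.of_forall fun ω => ?_
    rw [Real.norm_eq_abs, Real.norm_eq_abs, abs_of_nonneg (by positivity),
      abs_of_nonneg (by positivity : (0:ℝ) ≤ X ω ^ 4)]
    nlinarith [hX4 ω, pow_nonneg (hYn ω) 4]
  have hZ4leX4 : ∀ ω, Z ω ^ 4 ≤ X ω ^ 4 := fun ω => by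
    nlinarith [hX4 ω, pow_nonneg (hYn ω) 4]
  have hZ3int : Integrable (fun ω => Z ω ^ 3) μ := by
    refine ((integrable_const (1:ℝ)).add h4).mono
      ((hZm.pow_const 3).aestronglyMeasurable) ?_
    refine Filter.Eventually.of_forall fun ω => ?_
    simp only [Pi.add_apply]
    beta_reduce
    rw [Real.norm_eq_abs, Real.norm_eq_abs, abs_of_nonneg (by positivity : (0:ℝ) ≤ Z ω ^ 3),
      abs_of_nonneg (by positivity : (0:ℝ) ≤ 1 + X ω ^ 4)]
    nlinarith [hZ4leX4 ω, hZn ω, sq_nonneg (Z ω ^ 2 - Z ω), sq_nonneg (Z ω - 1),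
      sq_nonneg (Z ω ^ 2 - 1)]
  -- integral quantities
  set m : ℝ := ∫ ω, Y ω ∂μ with hm_def
  have hmZ : ∫ ω, Z ω ∂μ = m := by
    have : (∫ ω, Y ω ∂μ) - ∫ ω, Z ω ∂μ = 0 := by
      rw [← integral_sub hYint hZint, ← hE1]
      exact integral_congr_ae (Filter.Eventually.of_forall fun ω => (hX1 ω).symm)
    linarith
  have hm0 : 0 ≤ m := integral_nonneg hYn
  have hmt : m ≤ t := by
    have hle : ∀ᵐ ω ∂μ, Y ω ≤ t := by
      filter_upwards [hae] with ω hω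
      exact max_le hω.le ht.le
    calc m ≤ ∫ (_ : Ω), t ∂μ := integral_mono_ae hYint (integrable_const t) hle
      _ = t := by simp
  have hY2le : ∫ ω, Y ω ^ 2 ∂μ ≤ t * m := by
    have hle : ∀ᵐ ω ∂μ, Y ω ^ 2 ≤ t * Y ω := by
      filter_upwards [hae] with ω hω
      have : Y ω ≤ t := max_le hω.le ht.le
      nlinarith [hYn ω]
    calc (∫ ω, Y ω ^ 2 ∂μ) ≤ ∫ ω, t * Y ω ∂μ :=
          integral_mono_ae hY2int (hYint.const_mul t) hle
      _ = t * m := by rw [integral_const_mul]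
  set A : ℝ := ∫ ω, Z ω ^ 2 ∂μ with hA_def
  set B : ℝ := ∫ ω, Z ω ^ 4 ∂μ with hB_def
  set C : ℝ := ∫ ω, Z ω ^ 3 ∂μ with hC_def
  have hC0 : 0 ≤ C := integral_nonneg fun ω => by positivity
  have hB0 : 0 ≤ B := integral_nonneg fun ω => by positivity
  have hsplit : σ ^ 2 = (∫ ω, Y ω ^ 2 ∂μ) + A := by
    rw [hA_def, ← integral_add hY2int hZ2int, ← hE2]
    exact integral_congr_ae (Filter.Eventually.of_forall fun ω => hX2 ω)
  have hBle : B ≤ b * σ ^ 4 := by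
    refine le_trans ?_ hE4
    exact integral_mono hZ4int h4 fun ω => hZ4leX4 ω
  -- Cauchy-Schwarz 1 : A^2 ≤ m * C
  have hcs1 : A ^ 2 ≤ m * C := by
    have ef : ∀ ω, Real.sqrt (Z ω) ^ 2 = Z ω := fun ω => Real.sq_sqrt (hZn ω)
    have h := my_cs (μ := μ) (f := fun ω => Real.sqrt (Z ω))
      (g := fun ω => Real.sqrt (Z ω) ^ 3)
      (fun ω => Real.sqrt_nonneg _) (fun ω => by positivity)
      (hZm.sqrt).aestronglyMeasurable ((hZm.sqrt.pow_const 3)).aestronglyMeasurable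
      (by
        have e : (fun ω => Real.sqrt (Z ω) ^ 2) = Z := funext fun ω => ef ω
        rw [e]; exact hZint)
      (by
        have e : (fun ω => (Real.sqrt (Z ω) ^ 3) ^ 2) = fun ω => Z ω ^ 3 :=
          funext fun ω => by
            rw [show (Real.sqrt (Z ω) ^ 3) ^ 2 = (Real.sqrt (Z ω) ^ 2) ^ 3 by ring, ef ω]
        rw [e]; exact hZ3int)
    have e1 : (∫ ω, Real.sqrt (Z ω) * Real.sqrt (Z ω) ^ 3 ∂μ) = A := by
      rw [hA_def]; congr 1; ext ω
      rw [show Real.sqrt (Z ω) * Real.sqrt (Z ω) ^ 3 = (Real.sqrt (Z ω) ^ 2) ^ 2 by ring, ef ω]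
    have e2 : (∫ ω, Real.sqrt (Z ω) ^ 2 ∂μ) = m := by
      rw [← hmZ]; congr 1; ext ω; exact ef ω
    have e3 : (∫ ω, (Real.sqrt (Z ω) ^ 3) ^ 2 ∂μ) = C := by
      rw [hC_def]; congr 1; ext ω
      rw [show (Real.sqrt (Z ω) ^ 3) ^ 2 = (Real.sqrt (Z ω) ^ 2) ^ 3 by ring, ef ω]
    rw [e1, e2, e3] at h
    exact h
  -- Cauchy-Schwarz 2 : C^2 ≤ A * B
  have hcs2 : C ^ 2 ≤ A * B := by
    have h := my_cs (μ := μ) (f := Z) (g := fun ω => Z ω ^ 2)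
      hZn (fun ω => sq_nonneg _)
      hZm.aestronglyMeasurable ((hZm.pow_const 2)).aestronglyMeasurable
      hZ2int
      (by
        have e : (fun ω => (Z ω ^ 2) ^ 2) = fun ω => Z ω ^ 4 := funext fun ω => by ring
        rw [e]; exact hZ4int)
    have e1 : (∫ ω, Z ω * Z ω ^ 2 ∂μ) = C := by
      rw [hC_def]; congr 1; ext ω; ring
    have e2 : (∫ ω, (Z ω ^ 2) ^ 2 ∂μ) = B := by
      rw [hB_def]; congr 1; ext ω; ring
    rw [e1, e2] at h
    exact h
  -- final contradiction
  clear_value m A B C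
  have hAlow : 3 * σ ^ 2 / 4 ≤ A := by
    have h1' : σ ^ 2 - t * m ≤ A := by nlinarith [hY2le]
    have h2' : t * m ≤ t ^ 2 := by nlinarith [ht.le]
    have h3' : t ^ 2 ≤ σ ^ 2 / 4 := by
      rw [ht2]
      rw [div_le_div_iff₀ (by positivity) (by norm_num)]
      nlinarith [mul_le_mul_of_nonneg_left hb1 (sq_nonneg σ)]
    linarith
  have hApos : 0 < A := by nlinarith [sq_nonneg σ, mul_pos hσ hσ]
  have hA4 : A ^ 4 ≤ m ^ 2 * (A * B) := by
    nlinarith [mul_self_le_mul_self (sq_nonneg A) hcs1,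
      mul_le_mul_of_nonneg_left hcs2 (sq_nonneg m)]
  have hA3 : A ^ 3 ≤ m ^ 2 * B :=
    le_of_mul_le_mul_left (by nlinarith [hA4]) hApos
  have hA3' : A ^ 3 ≤ σ ^ 6 / 4 := by
    have hm2 : m ^ 2 ≤ t ^ 2 := by nlinarith
    have : m ^ 2 * B ≤ t ^ 2 * (b * σ ^ 4) := by
      nlinarith [sq_nonneg t, sq_nonneg m]
    rw [ht2] at this
    have hb' : b ≠ 0 := ne_of_gt hb
    calc A ^ 3 ≤ σ ^ 2 / (4 * b) * (b * σ ^ 4) := le_trans hA3 this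
      _ = σ ^ 6 / 4 := by field_simp
  have hcube : (3 * σ ^ 2 / 4) ^ 3 ≤ A ^ 3 := pow_le_pow_left₀ (by positivity) hAlow 3
  nlinarith [pow_pos hσ 6, pow_pos (pow_pos hσ 2) 3]
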